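/- Let X be a set, let φ, ψ : X → ℝ^n be functions with components φ_i, ψ_i, and let l, b ∈ ℝ^n with l_i > 0 for all i. Define F_{(l,b)}^φ(x) = max_i (φ_i(x) − b_i)/l_i and F_{(l,b)}^ψ(x) = max_i (ψ_i(x) − b_i)/l_i. Then for every x ∈ X, |F_{(l,b)}^φ(x) − F_{(l,b)}^ψ(x)| ≤ (max_i |φ_i(x) − ψ_i(x)|)/(min_i l_i). In particular, if X is a compact topological space and φ, ψ are continuous, then max_{x∈X} |F_{(l,b)}^φ(x) − F_{(l,b)}^ψ(x)| ≤ (max_{x∈X} ‖φ(x) − ψ(x)‖∞)/(min_i l_i). -/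

import Mathlib

/-- The reduction function `F_{(l,b)}^φ(x) = max_i (φ_i(x) − b_i) / l_i`. -/
noncomputable def reductionFn {X : Type*} {n : ℕ} (l b : Fin (n + 1) → ℝ)
    (φ : X → Fin (n + 1) → ℝ) (x : X) : ℝ :=
  Finset.univ.sup' Finset.univ_nonempty fun i => (φ x i - b i) / l i

private lemma reduction_le {X : Type*} {n : ℕ} (φ ψ : X → Fin (n + 1) → ℝ)
    (l b : Fin (n + 1) → ℝ) (hl : ∀ i, 0 < l i) (x : X) :
    reductionFn l b φ x - reductionFn l b ψ x ≤
      (Finset.univ.sup' Finset.univ_nonempty fun i => |φ x i - ψ x i|) /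
        Finset.univ.inf' Finset.univ_nonempty l := by
  set m := Finset.univ.inf' Finset.univ_nonempty l with hm
  set M := Finset.univ.sup' Finset.univ_nonempty fun i => |φ x i - ψ x i| with hM
  have hm0 : 0 < m := Finset.lt_inf'_iff _ |>.2 fun i _ => hl i
  rw [sub_le_iff_le_add]
  apply Finset.sup'_le
  intro i _
  have h1 : (φ x i - b i) / l i ≤ (ψ x i - b i) / l i + |φ x i - ψ x i| / l i := by
    rw [← add_div]
    gcongr
    · exact (hl i).le
    · have := le_abs_self (φ x i - ψ x i); linarith
  have h2 : |φ x i - ψ x i| / l i ≤ M / m := by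
    apply div_le_div₀ ?_ (Finset.le_sup' (fun i => |φ x i - ψ x i|) (Finset.mem_univ i)) hm0 (Finset.inf'_le _ (Finset.mem_univ i))
    exact le_trans (abs_nonneg _) (Finset.le_sup' (fun i => |φ x i - ψ x i|) (Finset.mem_univ i))
  have h3 : (ψ x i - b i) / l i ≤ reductionFn l b ψ x :=
    Finset.le_sup' (fun j => (ψ x j - b j) / l j) (Finset.mem_univ i)
  calc (φ x i - b i) / l i ≤ (ψ x i - b i) / l i + |φ x i - ψ x i| / l i := h1
    _ ≤ reductionFn l b ψ x + M / m := add_le_add h3 h2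
    _ = M / m + reductionFn l b ψ x := add_comm _ _

private lemma reduction_pointwise {X : Type*} {n : ℕ} (φ ψ : X → Fin (n + 1) → ℝ)
    (l b : Fin (n + 1) → ℝ) (hl : ∀ i, 0 < l i) (x : X) :
    |reductionFn l b φ x - reductionFn l b ψ x| ≤
      (Finset.univ.sup' Finset.univ_nonempty fun i => |φ x i - ψ x i|) /
        Finset.univ.inf' Finset.univ_nonempty l := by
  rw [abs_sub_le_iff]
  refine ⟨reduction_le φ ψ l b hl x, ?_⟩
  have := reduction_le ψ φ l b hl x
  simpa [abs_sub_comm] using this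

theorem reduction_stability {X : Type*} (n : ℕ) (φ ψ : X → Fin (n + 1) → ℝ)
    (l b : Fin (n + 1) → ℝ) (hl : ∀ i, 0 < l i) :
    (∀ x : X,
      |reductionFn l b φ x - reductionFn l b ψ x| ≤
        (Finset.univ.sup' Finset.univ_nonempty fun i => |φ x i - ψ x i|) /
          Finset.univ.inf' Finset.univ_nonempty l) ∧
    (∀ [TopologicalSpace X] [CompactSpace X] [Nonempty X],
      Continuous φ → Continuous ψ →
        (⨆ x : X, |reductionFn l b φ x - reductionFn l b ψ x|) ≤
          (⨆ x : X, ‖φ x - ψ x‖) / Finset.univ.inf' Finset.univ_nonempty l) := by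
  have hm0 : 0 < Finset.univ.inf' Finset.univ_nonempty l :=
    Finset.lt_inf'_iff _ |>.2 fun i _ => hl i
  refine ⟨reduction_pointwise φ ψ l b hl, ?_⟩
  intro _ _ _ hφ hψ
  have hcont : Continuous fun x => ‖φ x - ψ x‖ := (hφ.sub hψ).norm
  have hbdd : BddAbove (Set.range fun x => ‖φ x - ψ x‖) :=
    (isCompact_range hcont).bddAbove
  apply ciSup_le
  intro x
  have h1 := reduction_pointwise φ ψ l b hl x
  have h2 : (Finset.univ.sup' Finset.univ_nonempty fun i => |φ x i - ψ x i|) ≤ ‖φ x - ψ x‖ := by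
    apply Finset.sup'_le
    intro i _
    have : |φ x i - ψ x i| = ‖(φ x - ψ x) i‖ := by simp [Real.norm_eq_abs]
    rw [this]
    exact norm_le_pi_norm (φ x - ψ x) i
  have h3 : ‖φ x - ψ x‖ ≤ ⨆ x : X, ‖φ x - ψ x‖ := le_ciSup hbdd x
  calc |reductionFn l b φ x - reductionFn l b ψ x|
      ≤ (Finset.univ.sup' Finset.univ_nonempty fun i => |φ x i - ψ x i|) /
          Finset.univ.inf' Finset.univ_nonempty l := h1
    _ ≤ (⨆ x : X, ‖φ x - ψ x‖) / Finset.univ.inf' Finset.univ_nonempty l :=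
        by gcongr; exact h2.trans h3
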